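/- Let d ≥ 1, T > 0, and let K : [T, ∞) → Matrix (Fin d) (Fin d) ℝ be continuous with ‖K(t) − (1/t)·I_d‖ ≤ C/t² for all t ≥ T, for some constant C > 0. Let W : [T, ∞) → Matrix (Fin d) (Fin d) ℝ be the C¹ solution of the linear ODE W'(t) = W(t)·K(t) with W(T) = T·I_d. Then there exists an invertible matrix W_∞ ∈ Matrix (Fin d) (Fin d) ℝ such that ‖ (1/t) W(t) − W_∞ ‖ → 0 as t → ∞; in particular W(t) ∼ t·W_∞ grows linearly in t. -/

import Mathlib

attribute [local instance] Matrix.normedAddCommGroup Matrix.normedSpace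

open Set MeasureTheory Filter Matrix Topology

namespace Stmt19

lemma norm_mul_le' {d : ℕ} (A B : Matrix (Fin d) (Fin d) ℝ) : ‖A * B‖ ≤ d * ‖A‖ * ‖B‖ := by
  have h0 : (0:ℝ) ≤ d * ‖A‖ * ‖B‖ := by positivity
  rw [Matrix.norm_le_iff h0]
  intro i j
  calc ‖(A*B) i j‖ = |∑ k, A i k * B k j| := rfl
    _ ≤ ∑ k, |A i k * B k j| := Finset.abs_sum_le_sum_abs _ _
    _ ≤ ∑ _k : Fin d, ‖A‖ * ‖B‖ := by
        refine Finset.sum_le_sum fun k _ => ?_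
        rw [abs_mul]
        exact mul_le_mul (A.norm_entry_le_entrywise_sup_norm)
          (B.norm_entry_le_entrywise_sup_norm) (abs_nonneg _) (norm_nonneg _)
    _ = d * ‖A‖ * ‖B‖ := by simp [mul_assoc]

lemma norm_one_le {d : ℕ} : ‖(1 : Matrix (Fin d) (Fin d) ℝ)‖ ≤ 1 := by
  rw [Matrix.norm_le_iff zero_le_one]
  intro i j
  by_cases h : i = j <;> simp [Matrix.one_apply, h]

noncomputable def detCM (d : ℕ) : ContinuousMultilinearMap ℝ (fun _ : Fin d => (Fin d → ℝ)) ℝ :=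
  MultilinearMap.mkContinuous
    (Matrix.detRowAlternating (R := ℝ) (n := Fin d)).toMultilinearMap
    (Nat.factorial d) (fun m => by
      have h1 : (Matrix.detRowAlternating (R := ℝ) (n := Fin d)).toMultilinearMap m
          = Matrix.det (Matrix.of m) := rfl
      rw [h1, Matrix.det_apply]
      calc ‖∑ σ : Equiv.Perm (Fin d), Equiv.Perm.sign σ • ∏ i, Matrix.of m (σ i) i‖
          ≤ ∑ σ : Equiv.Perm (Fin d), ‖Equiv.Perm.sign σ • ∏ i, Matrix.of m (σ i) i‖ :=
            norm_sum_le _ _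
        _ ≤ ∑ _σ : Equiv.Perm (Fin d), ∏ i, ‖m i‖ := by
            refine Finset.sum_le_sum fun σ _ => ?_
            have hs : ‖Equiv.Perm.sign σ • ∏ i, Matrix.of m (σ i) i‖
                = ‖∏ i, Matrix.of m (σ i) i‖ := by
              rcases Int.units_eq_one_or (Equiv.Perm.sign σ) with h | h <;>
                simp [h, Units.smul_def]
            rw [hs]
            have : ‖∏ i, Matrix.of m (σ i) i‖ ≤ ∏ i, ‖m (σ i)‖ := by
              rw [norm_prod]
              exact Finset.prod_le_prod (fun i _ => norm_nonneg _)
                (fun i _ => norm_le_pi_norm (m (σ i)) i)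
            refine this.trans ?_
            rw [Equiv.prod_comp σ (fun j => ‖m j‖)]
        _ = (Nat.factorial d) * ∏ i, ‖m i‖ := by
            rw [Finset.sum_const, Finset.card_univ, Fintype.card_perm]
            simp [Fintype.card_fin, nsmul_eq_mul]
      )

lemma detCM_apply {d : ℕ} (m : Fin d → (Fin d → ℝ)) :
    detCM d m = Matrix.det (Matrix.of m) := rfl

/-- The algebraic heart of Jacobi's formula. -/
lemma jacobi_sum {d : ℕ} (Vt E : Matrix (Fin d) (Fin d) ℝ) :
    ∑ i, detCM d (Function.update (fun k => Vtᵀ k) i (fun j => (Vt * E) j i))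
      = Vt.det * E.trace := by
  have hcol : ∀ i : Fin d, (fun j => (Vt * E) j i) = ∑ k, E k i • Vtᵀ k := by
    intro i
    funext j
    simp [Matrix.mul_apply, Finset.sum_apply, mul_comm]
  have hterm : ∀ i : Fin d,
      detCM d (Function.update (fun k => Vtᵀ k) i (fun j => (Vt * E) j i))
        = E i i * Vt.det := by
    intro i
    rw [hcol i]
    rw [show (fun k => Vtᵀ k) = (Vtᵀ : Matrix (Fin d) (Fin d) ℝ) from rfl]
    have hsum := (detCM d).toMultilinearMap.map_update_sum (Finset.univ) i
      (fun k => E k i • Vtᵀ k) (Vtᵀ)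
    rw [show ((detCM d).toMultilinearMap : (∀ _ : Fin d, Fin d → ℝ) → ℝ)
        = detCM d from rfl] at hsum
    rw [hsum]
    have hzero : ∀ k : Fin d, k ≠ i →
        detCM d (Function.update (Vtᵀ : Matrix (Fin d) (Fin d) ℝ) i (E k i • Vtᵀ k))
          = 0 := by
      intro k hk
      rw [(detCM d).map_update_smul (m := (Vtᵀ : Fin d → Fin d → ℝ)), detCM_apply]
      have h2 : Matrix.of (Function.update (Vtᵀ : Matrix (Fin d) (Fin d) ℝ) i (Vtᵀ k))
          = Matrix.updateRow Vtᵀ i (Vtᵀ k) := rfl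
      rw [h2, Matrix.det_zero_of_row_eq hk.symm
        (by rw [Matrix.updateRow_self, Matrix.updateRow_ne hk])]
      simp
    rw [Finset.sum_eq_single i (fun k _ hk => hzero k hk) (by simp)]
    rw [(detCM d).map_update_smul (m := (Vtᵀ : Fin d → Fin d → ℝ)),
      Function.update_eq_self (f := (Vtᵀ : Fin d → Fin d → ℝ)),
      detCM_apply (m := (Vtᵀ : Fin d → Fin d → ℝ))]
    rw [show Matrix.of (Vtᵀ : Matrix (Fin d) (Fin d) ℝ) = Vtᵀ from rfl,
      Matrix.det_transpose]
    simp
  rw [Finset.sum_congr rfl (fun i _ => hterm i)]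
  rw [Matrix.trace, mul_comm, Finset.sum_mul]
  rfl

noncomputable def Lcol (d : ℕ) (i : Fin d) : Matrix (Fin d) (Fin d) ℝ →L[ℝ] (Fin d → ℝ) :=
  ContinuousLinearMap.pi (fun j =>
    (ContinuousLinearMap.proj (R := ℝ) (φ := fun _ : Fin d => ℝ) i).comp
    (ContinuousLinearMap.proj (R := ℝ) (φ := fun _ : Fin d => Fin d → ℝ) j))

lemma Lcol_apply {d : ℕ} (i : Fin d) (M : Matrix (Fin d) (Fin d) ℝ) :
    Lcol d i M = fun j => M j i := rfl

lemma det_hasDerivWithinAt {d : ℕ} {V : ℝ → Matrix (Fin d) (Fin d) ℝ}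
    {E : Matrix (Fin d) (Fin d) ℝ} {s : Set ℝ} {t : ℝ}
    (hV : HasDerivWithinAt V (V t * E) s t) :
    HasDerivWithinAt (fun u => (V u).det) ((V t).det * E.trace) s t := by
  classical
  have hg : ∀ i : Fin d,
      HasDerivWithinAt (fun u => Lcol d i (V u)) (Lcol d i (V t * E)) s t :=
    fun i => (Lcol d i).hasFDerivAt.comp_hasDerivWithinAt t hV
  have hgF : ∀ i : Fin d, HasFDerivWithinAt (fun u => Lcol d i (V u))
      ((1 : ℝ →L[ℝ] ℝ).smulRight (Lcol d i (V t * E))) s t :=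
    fun i => (hg i).hasFDerivWithinAt
  have hF := HasFDerivWithinAt.multilinear_comp (f := detCM d) hgF
  have hD := hF.hasDerivWithinAt
  have hup : (fun j => Lcol d j (V t)) = (fun k => (V t)ᵀ k) := by
    funext k j; rfl
  have heq1 : (fun u => detCM d (fun i => Lcol d i (V u))) = fun u => (V u).det := by
    funext u
    rw [detCM_apply]
    have h2 : Matrix.of (fun i => Lcol d i (V u)) = (V u)ᵀ := by
      ext i j; rfl
    rw [h2, Matrix.det_transpose]
  have heq2 : ((∑ i : Fin d, ((detCM d).toContinuousLinearMap (fun j => Lcol d j (V t)) i).comp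
      ((1 : ℝ →L[ℝ] ℝ).smulRight (Lcol d i (V t * E)))) : ℝ →L[ℝ] ℝ) (1 : ℝ)
        = (V t).det * E.trace := by
    rw [ContinuousLinearMap.sum_apply]
    have h3 : ∀ i : Fin d, (((detCM d).toContinuousLinearMap (fun j => Lcol d j (V t)) i).comp
        ((1 : ℝ →L[ℝ] ℝ).smulRight (Lcol d i (V t * E)))) (1 : ℝ)
          = detCM d (Function.update (fun k => (V t)ᵀ k) i (fun j => (V t * E) j i)) := by
      intro i
      rw [ContinuousLinearMap.comp_apply, ContinuousLinearMap.smulRight_apply]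
      simp only [ContinuousLinearMap.one_apply, one_smul,
        ContinuousMultilinearMap.toContinuousLinearMap_apply]
      rw [hup, Lcol_apply]
    rw [Finset.sum_congr rfl (fun i _ => h3 i)]
    exact jacobi_sum (V t) E
  rw [heq1] at hD
  rw [heq2] at hD
  exact hD

theorem main (d : ℕ) (hd : 1 ≤ d) (T C : ℝ) (hT : 0 < T) (hC : 0 < C)
    (K : ℝ → Matrix (Fin d) (Fin d) ℝ)
    (hKc : ContinuousOn K (Set.Ici T))
    (hK : ∀ t ∈ Set.Ici T,
      ‖K t - (1/t) • (1 : Matrix (Fin d) (Fin d) ℝ)‖ ≤ C / t ^ 2)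
    (W : ℝ → Matrix (Fin d) (Fin d) ℝ)
    (hW : ∀ t ∈ Set.Ici T, HasDerivWithinAt W (W t * K t) (Set.Ici T) t)
    (hWT : W T = T • (1 : Matrix (Fin d) (Fin d) ℝ)) :
    ∃ Winf : Matrix (Fin d) (Fin d) ℝ, IsUnit Winf ∧
      Filter.Tendsto (fun t : ℝ => ‖(1/t) • W t - Winf‖) Filter.atTop (nhds 0) := by
  set E : ℝ → Matrix (Fin d) (Fin d) ℝ :=
    fun t => K t - (1/t) • (1 : Matrix (Fin d) (Fin d) ℝ) with hEdef
  set V : ℝ → Matrix (Fin d) (Fin d) ℝ := fun t => (1/t) • W t with hVdef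
  have htpos : ∀ t ∈ Ici T, (0:ℝ) < t := fun t ht => lt_of_lt_of_le hT ht
  have htne : ∀ t ∈ Ici T, (t:ℝ) ≠ 0 := fun t ht => (htpos t ht).ne'
  -- V T = 1
  have hVT : V T = 1 := by
    simp only [hVdef, hWT, smul_smul, one_div]
    rw [inv_mul_cancel₀ hT.ne', one_smul]
  -- derivative of V
  have hVd : ∀ t ∈ Ici T, HasDerivWithinAt V (V t * E t) (Ici T) t := by
    intro t ht
    have h1 : HasDerivWithinAt (fun u : ℝ => 1/u) (-(t^2)⁻¹) (Ici T) t := by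
      simpa [one_div] using (hasDerivAt_inv (htne t ht)).hasDerivWithinAt
    have h2 := h1.smul (hW t ht)
    have h3 : V t * E t = (1/t) • (W t * K t) + (-(t ^ 2)⁻¹) • W t := by
      simp only [hVdef, hEdef]
      rw [mul_sub, smul_mul_assoc, Matrix.mul_smul, mul_one, smul_smul]
      rw [show (1/t) * (1/t) = (t^2)⁻¹ by rw [div_mul_div_comm, one_mul, ← pow_two, one_div]]
      rw [sub_eq_add_neg, neg_smul]
    rw [h3]
    exact h2
  -- continuity of V on Ici T
  have hVc : ContinuousOn V (Ici T) := fun t ht => (hVd t ht).continuousWithinAt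
  -- bound on E
  have hEb : ∀ t ∈ Ici T, ‖E t‖ ≤ C / t ^ 2 := fun t ht => hK t ht
  -- continuity of E
  have hEc : ContinuousOn E (Ici T) := by
    refine hKc.sub (ContinuousOn.fun_smul ?_ continuousOn_const)
    exact continuousOn_const.div continuousOn_id (fun t ht => htne t ht)
  -- the Gronwall bound
  set M : ℝ := Real.exp ((d * C + 1) / T) with hMdef
  have hM1 : 1 ≤ M := by
    rw [hMdef]
    rw [show (1:ℝ) = Real.exp 0 by simp]
    exact Real.exp_le_exp.mpr (by positivity)
  have hMpos : 0 < M := lt_of_lt_of_le one_pos hM1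
  have hVb : ∀ t ∈ Ici T, ‖V t‖ ≤ M := by
    intro b hb
    set B : ℝ → ℝ := fun u => Real.exp ((d*C+1) * (1/T - 1/u)) with hBdef
    have hBpos : ∀ u, 0 < B u := fun u => Real.exp_pos _
    have hBd : ∀ u ∈ Ico T b, HasDerivWithinAt B (B u * ((d*C+1) * (u^2)⁻¹)) (Ici u) u := by
      intro u hu
      have hu0 : u ≠ 0 := htne u hu.1
      have h1 : HasDerivAt (fun v : ℝ => 1/T - 1/v) ((u^2)⁻¹) u := by
        simpa [one_div] using (hasDerivAt_inv hu0).const_sub (1/T)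
      have h2 := (h1.const_mul (d*C+1)).exp
      have h3 : HasDerivAt B (B u * ((d*C+1) * (u^2)⁻¹)) u := by
        simpa [hBdef, mul_comm, mul_assoc, mul_left_comm] using h2
      exact h3.hasDerivWithinAt
    have key := image_norm_le_of_norm_deriv_right_lt_deriv_boundary'
      (f := V) (f' := fun u => V u * E u) (a := T) (b := b)
      (hVc.mono Icc_subset_Ici_self)
      (fun x hx => (hVd x hx.1).mono (Ici_subset_Ici.mpr hx.1))
      (B := B) (B' := fun u => B u * ((d*C+1) * (u^2)⁻¹))
      (by rw [hVT, hBdef]; simpa using norm_one_le)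
      (by
        refine Real.continuous_exp.comp_continuousOn ?_
        refine continuousOn_const.mul (continuousOn_const.sub ?_)
        exact continuousOn_const.div continuousOn_id
          (fun x hx => htne x hx.1))
      hBd
      (by
        intro x hx heq
        have hx0 : 0 < x := htpos x hx.1
        calc ‖V x * E x‖ ≤ d * ‖V x‖ * ‖E x‖ := norm_mul_le' _ _
          _ ≤ d * B x * (C / x^2) := by
              rw [heq]
              refine mul_le_mul_of_nonneg_left (hEb x hx.1) ?_
              positivity
          _ = B x * (d*C * (x^2)⁻¹) := by field_simp
          _ < B x * ((d*C+1) * (x^2)⁻¹) := by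
              refine mul_lt_mul_of_pos_left ?_ (hBpos x)
              exact mul_lt_mul_of_pos_right (by linarith) (inv_pos.mpr (pow_pos hx0 2))
        )
    have hVbB : ‖V b‖ ≤ B b := key ⟨hb, le_refl b⟩
    refine hVbB.trans ?_
    rw [hBdef, hMdef]
    refine Real.exp_le_exp.mpr ?_
    have hb0 : 0 < b := htpos b hb
    have h1b : 0 ≤ 1/b := by positivity
    have h2b : 1/T - 1/b ≤ 1/T := by linarith
    have hdC1 : (0:ℝ) ≤ d*C+1 := by
      have := mul_nonneg (Nat.cast_nonneg (α := ℝ) d) hC.le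
      linarith
    refine le_trans (mul_le_mul_of_nonneg_left h2b hdC1) ?_
    rw [mul_one_div]
  -- the integrand
  set g : ℝ → Matrix (Fin d) (Fin d) ℝ := fun u => V u * E u with hgdef
  have hgc : ContinuousOn g (Ici T) := by
    refine continuousOn_pi.mpr fun i => continuousOn_pi.mpr fun j => ?_
    have hent : (fun u => g u i j) = fun u => ∑ k, V u i k * E u k j := by
      funext u; simp [hgdef, Matrix.mul_apply]
    rw [hent]
    refine continuousOn_finset_sum _ fun k _ => ContinuousOn.mul ?_ ?_
    · exact ((continuous_apply k).comp (continuous_apply i)).comp_continuousOn hVc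
    · exact ((continuous_apply j).comp (continuous_apply k)).comp_continuousOn hEc
  have hgb : ∀ u ∈ Ici T, ‖g u‖ ≤ d * M * C * (u^2)⁻¹ := by
    intro u hu
    have h1 : ‖g u‖ ≤ d * ‖V u‖ * ‖E u‖ := norm_mul_le' _ _
    have h2 : d * ‖V u‖ * ‖E u‖ ≤ d * M * (C / u^2) := by
      refine mul_le_mul (mul_le_mul_of_nonneg_left (hVb u hu) (Nat.cast_nonneg d))
        (hEb u hu) (norm_nonneg _) ?_
      exact mul_nonneg (Nat.cast_nonneg d) hMpos.le
    refine h1.trans (h2.trans (le_of_eq (by ring)))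
  letI : ContinuousENorm (Matrix (Fin d) (Fin d) ℝ) := SeminormedAddGroup.toContinuousENorm
  letI : TopologicalSpace.PseudoMetrizableSpace (Matrix (Fin d) (Fin d) ℝ) :=
    inferInstanceAs (TopologicalSpace.PseudoMetrizableSpace (Fin d → Fin d → ℝ))
  have hgi : IntegrableOn g (Ioi T) := by
    refine Integrable.mono' (g := fun u => d * M * C * u ^ (-2:ℝ)) ?_ ?_ ?_
    · exact ((integrableOn_Ioi_rpow_of_lt (by norm_num) hT).const_mul _)
    · exact (hgc.mono Ioi_subset_Ici_self).aestronglyMeasurable measurableSet_Ioi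
    · filter_upwards [ae_restrict_mem measurableSet_Ioi] with u hu
      have hu' : u ∈ Ici T := show T ≤ u from le_of_lt hu
      have hu0 : (0:ℝ) < u := htpos u hu'
      have h2 : u ^ (-2:ℝ) = (u^2)⁻¹ := by
        rw [show (-2:ℝ) = -((2:ℕ):ℝ) by norm_num, Real.rpow_neg hu0.le, Real.rpow_natCast]
      rw [h2]
      exact hgb u hu'
  have hFTC : ∀ b ∈ Ici T, ∫ u in T..b, g u = V b - V T := by
    intro b hb
    refine intervalIntegral.integral_eq_sub_of_hasDeriv_right_of_le hb ?_ ?_ ?_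
    · exact hVc.mono Icc_subset_Ici_self
    · intro x hx
      exact (hVd x (le_of_lt hx.1)).mono (fun y hy => le_of_lt (lt_trans hx.1 hy))
    · rw [intervalIntegrable_iff_integrableOn_Ioc_of_le hb]
      exact hgi.mono_set Ioc_subset_Ioi_self
  set Winf : Matrix (Fin d) (Fin d) ℝ := V T + ∫ u in Ioi T, g u with hWinfdef
  have hVlim : Tendsto V atTop (𝓝 Winf) := by
    have h1 : Tendsto (fun b => ∫ u in T..b, g u) atTop (𝓝 (∫ u in Ioi T, g u)) :=
      MeasureTheory.intervalIntegral_tendsto_integral_Ioi T hgi tendsto_id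
    have h2 : Tendsto (fun b => V T + ∫ u in T..b, g u) atTop (𝓝 Winf) :=
      tendsto_const_nhds.add h1
    refine h2.congr' ?_
    filter_upwards [eventually_ge_atTop T] with b hb
    rw [hFTC b hb, add_sub_cancel]
  refine ⟨Winf, ?_, tendsto_iff_norm_sub_tendsto_zero.mp hVlim⟩
  -- trace of E : continuity and bound
  have htreq : (fun u => (E u).trace) = fun u => ∑ i, E u i i := by
    funext u; rfl
  have htrc : ContinuousOn (fun u => (E u).trace) (Ici T) := by
    rw [htreq]
    exact continuousOn_finset_sum _ fun k _ =>
      ((continuous_apply (A := fun _ : Fin d => ℝ) k).comp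
        (continuous_apply (A := fun _ : Fin d => (Fin d → ℝ)) k)).comp_continuousOn hEc
  have htrb : ∀ u ∈ Ici T, |(E u).trace| ≤ d * C * (u^2)⁻¹ := by
    intro u hu
    have h1 : |(E u).trace| ≤ ∑ i : Fin d, |E u i i| := by
      have hrfl : (E u).trace = ∑ i, E u i i := rfl
      rw [hrfl]; exact Finset.abs_sum_le_sum_abs _ _
    have h2 : (∑ i : Fin d, |E u i i|) ≤ ∑ _i : Fin d, ‖E u‖ :=
      Finset.sum_le_sum fun i _ => (E u).norm_entry_le_entrywise_sup_norm
    have h3 : (∑ _i : Fin d, ‖E u‖) = d * ‖E u‖ := by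
      rw [Finset.sum_const, Finset.card_univ, Fintype.card_fin, nsmul_eq_mul]
    have h4 : (d:ℝ) * ‖E u‖ ≤ d * (C / u^2) :=
      mul_le_mul_of_nonneg_left (hEb u hu) (Nat.cast_nonneg d)
    refine h1.trans (h2.trans ?_)
    rw [h3]
    refine h4.trans (le_of_eq (by ring))
  -- the primitive of the trace
  set τ : ℝ → ℝ := fun u => ∫ s in T..u, (E s).trace with hτdef
  have hτint : ∀ b ∈ Ici T, IntervalIntegrable (fun u => (E u).trace) volume T b := by
    intro b hb
    refine ContinuousOn.intervalIntegrable ?_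
    rw [uIcc_of_le hb]
    exact htrc.mono Icc_subset_Ici_self
  have hτd : ∀ u ∈ Ici T, HasDerivWithinAt τ ((E u).trace) (Ici u) u := by
    intro u hu
    have hsub : Ioi u ⊆ Ici T := fun y hy => show T ≤ y from le_of_lt (lt_of_le_of_lt hu hy)
    refine intervalIntegral.integral_hasDerivWithinAt_right (t := Ioi u)
      (hτint u hu) ?_ ?_
    · exact ⟨Ici T, mem_of_superset self_mem_nhdsWithin hsub,
        htrc.aestronglyMeasurable measurableSet_Ici⟩
    · exact (htrc u hu).mono hsub
  have hτT : τ T = 0 := intervalIntegral.integral_same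
  -- Liouville: det (V b) = exp (τ b)
  have hdetV : ∀ b ∈ Ici T, (V b).det = Real.exp (τ b) := by
    intro b hb
    have hτcont : ContinuousOn τ (Icc T b) := by
      have h_int : IntegrableOn (fun u => (E u).trace) (uIcc T b) := by
        rw [uIcc_of_le hb]
        exact (htrc.mono Icc_subset_Ici_self).integrableOn_compact isCompact_Icc
      have := intervalIntegral.continuousOn_primitive_interval h_int
      rwa [uIcc_of_le hb] at this
    have hdetc : Continuous fun A : Matrix (Fin d) (Fin d) ℝ => A.det := by
      have h : (fun A : Matrix (Fin d) (Fin d) ℝ => A.det) = fun A => detCM d A := by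
        funext A; rfl
      rw [h]
      exact (detCM d).cont
    have hcont : ContinuousOn (fun u => Real.exp (-(τ u)) * (V u).det) (Icc T b) := by
      refine ContinuousOn.mul ?_ ?_
      · exact Real.continuous_exp.comp_continuousOn hτcont.neg
      · exact hdetc.comp_continuousOn (hVc.mono Icc_subset_Ici_self)
    have hder : ∀ x ∈ Ico T b, HasDerivWithinAt
        (fun u => Real.exp (-(τ u)) * (V u).det) 0 (Ici x) x := by
      intro x hx
      have hx' : x ∈ Ici T := hx.1
      have h1 : HasDerivWithinAt (fun u => Real.exp (-(τ u)))
          (Real.exp (-(τ x)) * (-(E x).trace)) (Ici x) x := (hτd x hx').neg.exp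
      have h2 : HasDerivWithinAt (fun u => (V u).det)
          ((V x).det * (E x).trace) (Ici x) x :=
        det_hasDerivWithinAt ((hVd x hx').mono (Ici_subset_Ici.mpr hx.1))
      have h3 := h1.fun_mul h2
      exact h3.congr_deriv (by ring)
    have hconst := constant_of_has_deriv_right_zero hcont hder b ⟨hb, le_refl b⟩
    rw [hτT] at hconst
    simp only [neg_zero, Real.exp_zero, one_mul, hVT, Matrix.det_one] at hconst
    rw [Real.exp_neg] at hconst
    exact ((inv_mul_eq_one₀ (Real.exp_ne_zero _)).mp hconst).symm
  -- lower bound on τ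
  have hinv : ∀ b ∈ Ici T, (∫ s in T..b, (s^2)⁻¹) = 1/T - 1/b := by
    intro b hb
    have hF : ∀ s ∈ uIcc T b, HasDerivAt (fun v : ℝ => -v⁻¹) ((s^2)⁻¹) s := by
      intro s hs
      rw [uIcc_of_le hb] at hs
      have hs0 : s ≠ 0 := htne s hs.1
      simpa using (hasDerivAt_inv hs0).fun_neg
    have hint : IntervalIntegrable (fun s : ℝ => (s^2)⁻¹) volume T b := by
      refine ContinuousOn.intervalIntegrable ?_
      rw [uIcc_of_le hb]
      exact ContinuousOn.inv₀ (continuousOn_pow 2)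
        (fun s hs => pow_ne_zero 2 (htne s hs.1))
    have := intervalIntegral.integral_eq_sub_of_hasDerivAt hF hint
    rw [this]
    rw [one_div, one_div]
    ring
  have hτlb : ∀ b ∈ Ici T, -(d * C / T) ≤ τ b := by
    intro b hb
    have hintg : IntervalIntegrable (fun s : ℝ => d * C * (s^2)⁻¹) volume T b :=
      ((ContinuousOn.intervalIntegrable (by
          rw [uIcc_of_le hb]
          exact (ContinuousOn.inv₀ (continuousOn_pow 2)
            (fun s hs => pow_ne_zero 2 (htne s hs.1))))).const_mul (d * C))
    have h1 : ‖∫ s in T..b, (E s).trace‖ ≤ |∫ s in T..b, d * C * (s^2)⁻¹| := by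
      refine intervalIntegral.norm_integral_le_abs_of_norm_le ?_ hintg
      filter_upwards [ae_restrict_mem measurableSet_Ioc] with s hs
      rw [uIoc_of_le hb] at hs
      exact htrb s (le_of_lt hs.1)
    have hb0 : 0 < b := htpos b hb
    have h1b : 0 ≤ 1/b := by positivity
    have hinvle : 1/b ≤ 1/T := by
      rw [one_div, one_div]
      exact inv_anti₀ hT hb
    have hdC : (0:ℝ) ≤ d * C := mul_nonneg (Nat.cast_nonneg d) hC.le
    have h2 : |∫ s in T..b, d * C * (s^2)⁻¹| = d * C * (1/T - 1/b) := by
      rw [intervalIntegral.integral_const_mul, hinv b hb]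
      exact abs_of_nonneg (mul_nonneg hdC (by linarith))
    have h3 : (d:ℝ) * C * (1/T - 1/b) ≤ d * C / T := by
      refine le_trans (mul_le_mul_of_nonneg_left (by linarith : 1/T - 1/b ≤ 1/T) hdC)
        (le_of_eq ?_)
      rw [mul_one_div]
    have habs : |τ b| ≤ d * C / T := by
      calc |τ b| = ‖∫ s in T..b, (E s).trace‖ := rfl
        _ ≤ |∫ s in T..b, d * C * (s^2)⁻¹| := h1
        _ = d * C * (1/T - 1/b) := h2
        _ ≤ d * C / T := h3
    linarith [(abs_le.mp habs).1]
  have hdetc2 : Continuous fun A : Matrix (Fin d) (Fin d) ℝ => A.det := by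
    have h : (fun A : Matrix (Fin d) (Fin d) ℝ => A.det) = fun A => detCM d A := by
      funext A; rfl
    rw [h]; exact (detCM d).cont
  have hdtend : Tendsto (fun b => (V b).det) atTop (𝓝 Winf.det) :=
    (hdetc2.continuousAt).tendsto.comp hVlim
  have hlow : ∀ᶠ b in atTop, Real.exp (-(d * C / T)) ≤ (V b).det := by
    filter_upwards [eventually_ge_atTop T] with b hb
    rw [hdetV b hb]
    exact Real.exp_le_exp.mpr (hτlb b hb)
  have hWdet : Real.exp (-(d * C / T)) ≤ Winf.det := ge_of_tendsto hdtend hlow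
  have hne : Winf.det ≠ 0 := ne_of_gt (lt_of_lt_of_le (Real.exp_pos _) hWdet)
  exact (Matrix.isUnit_iff_isUnit_det Winf).mpr (isUnit_iff_ne_zero.mpr hne)

end Stmt19

/-- Linear growth of the matrix weight solving `W' = W K`, `W(T) = T·I`, when
`K(t) = (1/t)·I + O(1/t²)` for `t ≥ T`: there is an invertible matrix `W_∞` with
`(1/t) W(t) → W_∞` as `t → ∞`. -/
theorem stmt_19 (d : ℕ) (hd : 1 ≤ d) (T C : ℝ) (hT : 0 < T) (hC : 0 < C)
    (K : ℝ → Matrix (Fin d) (Fin d) ℝ)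
    (hKc : ContinuousOn K (Set.Ici T))
    (hK : ∀ t ∈ Set.Ici T,
      ‖K t - (1/t) • (1 : Matrix (Fin d) (Fin d) ℝ)‖ ≤ C / t ^ 2)
    (W : ℝ → Matrix (Fin d) (Fin d) ℝ)
    (hW : ∀ t ∈ Set.Ici T, HasDerivWithinAt W (W t * K t) (Set.Ici T) t)
    (hWT : W T = T • (1 : Matrix (Fin d) (Fin d) ℝ)) :
    ∃ Winf : Matrix (Fin d) (Fin d) ℝ, IsUnit Winf ∧
      Filter.Tendsto (fun t : ℝ => ‖(1/t) • W t - Winf‖) Filter.atTop (nhds 0) := by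
  exact Stmt19.main d hd T C hT hC K hKc hK W hW hWT
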